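/- The polytope Q in R^3 with vertices (−1,0,0), (0,−1,0), (0,0,−1), (0,1,1), (1,0,1), (1,1,0) is totally generating: every lattice point of the cone over Q × {1} in R^4 (i.e., the cone generated by the vertices placed at height 1) is a nonnegative integer combination of the six vertices (each placed at height 1). -/

import Mathlib

/-- The six vertices of the polytope `Q` in `ℝ³`, placed at height 1 in `ℤ⁴`:
`(−1,0,0,1), (0,−1,0,1), (0,0,−1,1), (0,1,1,1), (1,0,1,1), (1,1,0,1)`. -/
def vQ : Fin 6 → (Fin 4 → ℤ) :=
  ![![-1,0,0,1], ![0,-1,0,1], ![0,0,-1,1], ![0,1,1,1], ![1,0,1,1], ![1,1,0,1]]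

lemma cons_val_five' {α : Type*} {m : ℕ} (x : α) (u : Fin (m+5) → α) :
    Matrix.vecCons x u 5 =
      Matrix.vecHead (Matrix.vecTail (Matrix.vecTail (Matrix.vecTail (Matrix.vecTail u)))) :=
  rfl

/-- The integer feasibility core: given the five facet inequalities and the
lattice congruence, produce a nonnegative integral combination. -/
lemma key_comb (a b c d : ℤ) (h3 : 3 ∣ (a + b + c + d))
    (H1 : 0 ≤ a + b + c + d) (H2 : 0 ≤ a + b - 2*c + d)
    (H3 : 0 ≤ a - 2*b + c + d) (H4 : 0 ≤ -2*a + b + c + d)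
    (H5 : 0 ≤ -a - b - c + 2*d) :
    ∃ n : Fin 6 → ℕ,
      a = -(n 0 : ℤ) + n 4 + n 5 ∧
      b = -(n 1 : ℤ) + n 3 + n 5 ∧
      c = -(n 2 : ℤ) + n 3 + n 4 ∧
      d = (n 0 : ℤ) + n 1 + n 2 + n 3 + n 4 + n 5 := by
  obtain ⟨t, ht⟩ := h3
  refine ⟨![(t - a - min t (t - a)).toNat,
            (t - b - min (t - min t (t - a)) (t - b)).toNat,
            (t - c - (t - min t (t - a) - min (t - min t (t - a)) (t - b))).toNat,
            (min t (t - a)).toNat,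
            (min (t - min t (t - a)) (t - b)).toNat,
            (t - min t (t - a) - min (t - min t (t - a)) (t - b)).toNat],
          ?_, ?_, ?_, ?_⟩ <;>
    simp only [Matrix.cons_val_zero, Matrix.cons_val_one, Matrix.head_cons,
      Matrix.cons_val_two, Matrix.tail_cons, Matrix.cons_val_three,
      Matrix.cons_val_four, cons_val_five'] <;>
    omega

/-- The polytope `Q` is totally generating: every point of the real cone
generated by the six lifted vertices `(vᵢ,1)` which lies in the lattice
generated by the `(vᵢ,1)` is a nonnegative integer combination of them. -/
theorem stmt3 (x : Fin 4 → ℤ)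
    (hlat : x ∈ Submodule.span ℤ (Set.range vQ))
    (hcone : ∃ c : Fin 6 → ℝ, (∀ i, 0 ≤ c i) ∧
      (fun j => (x j : ℝ)) = ∑ i, c i • fun j => (vQ i j : ℝ)) :
    ∃ n : Fin 6 → ℕ, x = ∑ i, n i • vQ i := by
  -- lattice congruence
  have hdiv : (3 : ℤ) ∣ (x 0 + x 1 + x 2 + x 3) := by
    refine Submodule.span_induction ?_ ?_ ?_ ?_ hlat
    · rintro y ⟨i, rfl⟩
      fin_cases i <;> norm_num [vQ, Matrix.cons_val_two, Matrix.cons_val_three, Matrix.tail_cons, Matrix.head_cons]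
    · simp
    · intro y z _ _ hy hz
      have : y 0 + z 0 + (y 1 + z 1) + (y 2 + z 2) + (y 3 + z 3)
          = (y 0 + y 1 + y 2 + y 3) + (z 0 + z 1 + z 2 + z 3) := by ring
      simpa [Pi.add_apply, this] using dvd_add hy hz
    · intro z y _ hy
      have : z * y 0 + z * y 1 + z * y 2 + z * y 3
          = z * (y 0 + y 1 + y 2 + y 3) := by ring
      simpa [Pi.smul_apply, smul_eq_mul, this] using Dvd.dvd.mul_left hy z
  obtain ⟨c, hc, hsum⟩ := hcone
  have e0 := congrFun hsum 0
  have e1 := congrFun hsum 1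
  have e2 := congrFun hsum 2
  have e3 := congrFun hsum 3
  simp only [Fin.sum_univ_six, vQ, Pi.smul_apply, smul_eq_mul,
    Matrix.cons_val_zero, Matrix.cons_val_one, Matrix.head_cons,
    Matrix.cons_val_two, Matrix.tail_cons, Matrix.cons_val_three,
    Matrix.cons_val_four, cons_val_five',
    Function.comp, Int.cast_neg, Int.cast_one, Int.cast_zero,
    Pi.add_apply] at e0 e1 e2 e3
  have hc0 := hc 0; have hc1 := hc 1; have hc2 := hc 2
  have hc3 := hc 3; have hc4 := hc 4; have hc5 := hc 5
  have H1 : (0 : ℤ) ≤ x 0 + x 1 + x 2 + x 3 := by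
    have : (0 : ℝ) ≤ (x 0 : ℝ) + x 1 + x 2 + x 3 := by
      rw [e0, e1, e2, e3]; nlinarith
    exact_mod_cast this
  have H2 : (0 : ℤ) ≤ x 0 + x 1 - 2 * x 2 + x 3 := by
    have : (0 : ℝ) ≤ (x 0 : ℝ) + x 1 - 2 * x 2 + x 3 := by
      rw [e0, e1, e2, e3]; nlinarith
    exact_mod_cast this
  have H3 : (0 : ℤ) ≤ x 0 - 2 * x 1 + x 2 + x 3 := by
    have : (0 : ℝ) ≤ (x 0 : ℝ) - 2 * x 1 + x 2 + x 3 := by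
      rw [e0, e1, e2, e3]; nlinarith
    exact_mod_cast this
  have H4 : (0 : ℤ) ≤ -2 * x 0 + x 1 + x 2 + x 3 := by
    have : (0 : ℝ) ≤ -2 * (x 0 : ℝ) + x 1 + x 2 + x 3 := by
      rw [e0, e1, e2, e3]; nlinarith
    exact_mod_cast this
  have H5 : (0 : ℤ) ≤ -x 0 - x 1 - x 2 + 2 * x 3 := by
    have : (0 : ℝ) ≤ -(x 0 : ℝ) - x 1 - x 2 + 2 * x 3 := by
      rw [e0, e1, e2, e3]; nlinarith
    exact_mod_cast this
  obtain ⟨n, ha, hb, hcc, hd⟩ := key_comb (x 0) (x 1) (x 2) (x 3) hdiv H1 H2 H3 H4 H5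
  refine ⟨n, ?_⟩
  have key : ∀ k : Fin 4, x k = (∑ i, n i • vQ i) k := by
    have k0 : x 0 = (∑ i, n i • vQ i) 0 := by
      simp only [Fin.sum_univ_six, vQ, Pi.smul_apply, smul_eq_mul, Pi.add_apply,
        Matrix.cons_val_zero, Matrix.cons_val_one, Matrix.head_cons,
        Matrix.cons_val_two, Matrix.tail_cons, Matrix.cons_val_three,
        Matrix.cons_val_four, cons_val_five', Fin.isValue, nsmul_eq_mul,
        Pi.mul_apply, Pi.natCast_apply]
      omega
    have k1 : x 1 = (∑ i, n i • vQ i) 1 := by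
      simp only [Fin.sum_univ_six, vQ, Pi.smul_apply, smul_eq_mul, Pi.add_apply,
        Matrix.cons_val_zero, Matrix.cons_val_one, Matrix.head_cons,
        Matrix.cons_val_two, Matrix.tail_cons, Matrix.cons_val_three,
        Matrix.cons_val_four, cons_val_five', Fin.isValue, nsmul_eq_mul,
        Pi.mul_apply, Pi.natCast_apply]
      omega
    have k2 : x 2 = (∑ i, n i • vQ i) 2 := by
      simp only [Fin.sum_univ_six, vQ, Pi.smul_apply, smul_eq_mul, Pi.add_apply,
        Matrix.cons_val_zero, Matrix.cons_val_one, Matrix.head_cons,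
        Matrix.cons_val_two, Matrix.tail_cons, Matrix.cons_val_three,
        Matrix.cons_val_four, cons_val_five', Fin.isValue, nsmul_eq_mul,
        Pi.mul_apply, Pi.natCast_apply]
      omega
    have k3 : x 3 = (∑ i, n i • vQ i) 3 := by
      simp only [Fin.sum_univ_six, vQ, Pi.smul_apply, smul_eq_mul, Pi.add_apply,
        Matrix.cons_val_zero, Matrix.cons_val_one, Matrix.head_cons,
        Matrix.cons_val_two, Matrix.tail_cons, Matrix.cons_val_three,
        Matrix.cons_val_four, cons_val_five', Fin.isValue, nsmul_eq_mul,
        Pi.mul_apply, Pi.natCast_apply]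
      omega
    intro k
    fin_cases k
    exacts [k0, k1, k2, k3]
  exact funext key
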